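/- Let f : C → Set A be an atomized model, let d and e be terms over C such that f does not satisfy d ≤ e, and let f' be the full crossing of d into e. Then for all terms a, b over C: f' satisfies a ≤ b if and only if every atomized model over C (with any atom type) that satisfies d ≤ e and satisfies every positive relation between terms that f satisfies, also satisfies a ≤ b. (The full crossing enforces d ≤ e while reducing freedom by exactly the minimal amount: the resulting model satisfies precisely the positive relations entailed by T⁺(f) ∪ {d ≤ e}.) -/
import Mathlib


universe u

/-- The atom set of a term (set of constants) `t` under the atomized model `f`. -/
def atomSet {C A : Type*} (f : C → Set A) (t : Set C) : Set A := ⋃ c ∈ t, f c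

/-- The atomized model `f` satisfies the positive relation `s ≤ t`. -/
def Sat {C A : Type*} (f : C → Set A) (s t : Set C) : Prop := atomSet f s ⊆ atomSet f t

/-- The full crossing of the term `d` into the term `e` in the atomized model `f`. -/
def fullCross {C A : Type*} (f : C → Set A) (d e : Set C) : C → Set (A ⊕ A × A) :=
  fun c => {z | Sum.elim
    (fun x => x ∈ f c ∧ x ∉ atomSet f d \ atomSet f e)
    (fun p : A × A =>
      p.1 ∈ atomSet f d \ atomSet f e ∧ p.2 ∈ atomSet f e ∧ (p.1 ∈ f c ∨ p.2 ∈ f c)) z}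

lemma mem_atomSet {C A : Type*} {f : C → Set A} {t : Set C} {x : A} :
    x ∈ atomSet f t ↔ ∃ c ∈ t, x ∈ f c := by simp [atomSet]

lemma inl_mem_atomSet {C A : Type*} {f : C → Set A} {d e t : Set C} {x : A} :
    Sum.inl x ∈ atomSet (fullCross f d e) t ↔
      x ∈ atomSet f t ∧ x ∉ atomSet f d \ atomSet f e := by
  constructor
  · rintro h
    obtain ⟨c, hc, hx, hΦ⟩ := mem_atomSet.1 h
    exact ⟨mem_atomSet.2 ⟨c, hc, hx⟩, hΦ⟩
  · rintro ⟨hx, hΦ⟩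
    obtain ⟨c, hc, hx⟩ := mem_atomSet.1 hx
    exact mem_atomSet.2 ⟨c, hc, hx, hΦ⟩

lemma inr_mem_atomSet {C A : Type*} {f : C → Set A} {d e t : Set C} {p : A × A} :
    Sum.inr p ∈ atomSet (fullCross f d e) t ↔
      p.1 ∈ atomSet f d \ atomSet f e ∧ p.2 ∈ atomSet f e ∧
        (p.1 ∈ atomSet f t ∨ p.2 ∈ atomSet f t) := by
  constructor
  · rintro h
    obtain ⟨c, hc, h1, h2, h3⟩ := mem_atomSet.1 h
    refine ⟨h1, h2, ?_⟩
    rcases h3 with h3 | h3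
    · exact Or.inl (mem_atomSet.2 ⟨c, hc, h3⟩)
    · exact Or.inr (mem_atomSet.2 ⟨c, hc, h3⟩)
  · rintro ⟨h1, h2, h3 | h3⟩
    · obtain ⟨c, hc, h3⟩ := mem_atomSet.1 h3
      exact mem_atomSet.2 ⟨c, hc, h1, h2, Or.inl h3⟩
    · obtain ⟨c, hc, h3⟩ := mem_atomSet.1 h3
      exact mem_atomSet.2 ⟨c, hc, h1, h2, Or.inr h3⟩

/-- If `f` does not satisfy `d ≤ e`, the full crossing of `d` into `e`
satisfies exactly the positive relations entailed by `T⁺(f) ∪ {d ≤ e}`: it reduces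
freedom by the minimal amount needed to enforce `d ≤ e`. -/
theorem fullCross_minimal_freedom_loss {C : Type u} {A : Type u}
    (f : C → Set A) (d e : Set C) (hde : ¬ Sat f d e) :
    ∀ a b : Set C,
      Sat (fullCross f d e) a b ↔
        ∀ (B : Type u) (g : C → Set B), Sat g d e →
          (∀ s t : Set C, Sat f s t → Sat g s t) → Sat g a b := by
  intro a b
  constructor
  · intro hab B g hgde hpres
    have hi : ∀ x, x ∈ atomSet f a → x ∉ atomSet f d \ atomSet f e → x ∈ atomSet f b := by
      intro x hx hΦ
      exact (inl_mem_atomSet.1 (hab (inl_mem_atomSet.2 ⟨hx, hΦ⟩))).1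
    have hii : ∀ φ ε, φ ∈ atomSet f d \ atomSet f e → ε ∈ atomSet f e →
        (φ ∈ atomSet f a ∨ ε ∈ atomSet f a) → (φ ∈ atomSet f b ∨ ε ∈ atomSet f b) := by
      intro φ ε h1 h2 h3
      have hm : Sum.inr (φ, ε) ∈ atomSet (fullCross f d e) a :=
        inr_mem_atomSet.2 ⟨h1, h2, h3⟩
      exact (inr_mem_atomSet.1 (hab hm)).2.2
    intro β hβ
    obtain ⟨c0, hc0, hβ0⟩ := mem_atomSet.1 hβ
    by_cases hcase : f c0 ⊆ atomSet f b
    · have hf : Sat f {c0} b := by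
        intro x hx
        obtain ⟨c, hc, hxc⟩ := mem_atomSet.1 hx
        rcases Set.mem_singleton_iff.1 hc with rfl
        exact hcase hxc
      exact hpres _ _ hf (mem_atomSet.2 ⟨c0, Set.mem_singleton c0, hβ0⟩)
    · -- there is φ ∈ f c0 ∩ Φ with φ ∉ atomSet f b
      obtain ⟨φ, hφ0, hφb⟩ := Set.not_subset.1 hcase
      have hφa : φ ∈ atomSet f a := mem_atomSet.2 ⟨c0, hc0, hφ0⟩
      have hφΦ : φ ∈ atomSet f d \ atomSet f e := by
        by_contra h
        exact hφb (hi φ hφa h)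
      -- every ε ∈ E is in atomSet f b
      have hE : ∀ ε ∈ atomSet f e, ε ∈ atomSet f b := by
        intro ε hε
        rcases hii φ ε hφΦ hε (Or.inl hφa) with h | h
        · exact absurd h hφb
        · exact h
      -- f c0 ⊆ atomSet f b ∪ atomSet f d
      have hf : Sat f {c0} (b ∪ d) := by
        intro x hx
        obtain ⟨c, hc, hxc⟩ := mem_atomSet.1 hx
        rcases Set.mem_singleton_iff.1 hc with rfl
        by_cases hxΦ : x ∈ atomSet f d \ atomSet f e
        · exact mem_atomSet.2 ⟨(mem_atomSet.1 hxΦ.1).choose,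
            Or.inr (mem_atomSet.1 hxΦ.1).choose_spec.1,
            (mem_atomSet.1 hxΦ.1).choose_spec.2⟩
        · obtain ⟨c', hc', hx'⟩ := mem_atomSet.1 (hi x (mem_atomSet.2 ⟨_, hc0, hxc⟩) hxΦ)
          exact mem_atomSet.2 ⟨c', Or.inl hc', hx'⟩
      have heb : Sat f e b := hE
      have hβbd : β ∈ atomSet g (b ∪ d) :=
        hpres _ _ hf (mem_atomSet.2 ⟨c0, Set.mem_singleton c0, hβ0⟩)
      obtain ⟨c', hc', hβ'⟩ := mem_atomSet.1 hβbd
      rcases hc' with hc' | hc'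
      · exact mem_atomSet.2 ⟨c', hc', hβ'⟩
      · have : β ∈ atomSet g e := hgde (mem_atomSet.2 ⟨c', hc', hβ'⟩)
        exact hpres _ _ heb this
  · intro h
    refine h _ (fullCross f d e) ?_ ?_
    · -- fullCross satisfies d ≤ e
      rintro (x | p) hx
      · obtain ⟨hxd, hΦ⟩ := inl_mem_atomSet.1 hx
        have hxe : x ∈ atomSet f e := by
          by_contra hxe
          exact hΦ ⟨hxd, hxe⟩
        exact inl_mem_atomSet.2 ⟨hxe, hΦ⟩
      · obtain ⟨h1, h2, _⟩ := inr_mem_atomSet.1 hx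
        exact inr_mem_atomSet.2 ⟨h1, h2, Or.inr h2⟩
    · -- fullCross preserves positive relations of f
      intro s t hst
      rintro (x | p) hx
      · obtain ⟨hxs, hΦ⟩ := inl_mem_atomSet.1 hx
        exact inl_mem_atomSet.2 ⟨hst hxs, hΦ⟩
      · obtain ⟨h1, h2, h3⟩ := inr_mem_atomSet.1 hx
        refine inr_mem_atomSet.2 ⟨h1, h2, ?_⟩
        rcases h3 with h3 | h3
        · exact Or.inl (hst h3)
        · exact Or.inr (hst h3)
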